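/- Let ε > 0, a > 0, b > 0, c > 0 and let (αₙ)_{n≥1} be a sequence with αₙ ∈ (0,1) for every n, satisfying for every n ≥ 1 the rescaled characteristic equation tanh(a·(nπ/c)·√(1−αₙ))/√(1−αₙ) = tanh(b·(nπ/c)·√(1+αₙ))/√(1+αₙ). Then n·√(1−αₙ) → +∞ and αₙ → 0 as n → ∞. -/

import Mathlib

open Real Filter

/-- tanh t ≥ 1 - exp(-t). -/
lemma tanh_ge_one_sub_exp (t : ℝ) : 1 - Real.exp (-t) ≤ Real.tanh t := by
  rw [Real.tanh_eq_sinh_div_cosh, Real.sinh_eq, Real.cosh_eq]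
  have hE : 0 < Real.exp t := Real.exp_pos t
  have hu : 0 < Real.exp (-t) := Real.exp_pos _
  have hmul : Real.exp t * Real.exp (-t) = 1 := by
    rw [← Real.exp_add]; simp
  rw [div_div_div_cancel_right₀ (two_ne_zero)]
  rw [le_div_iff₀ (by positivity)]
  nlinarith [sq_nonneg (Real.exp (-t) - 1), hu.le]

/-- tanh t ≤ 1. -/
lemma tanh_le_one' (t : ℝ) : Real.tanh t ≤ 1 := by
  rw [Real.tanh_eq_sinh_div_cosh, Real.sinh_eq, Real.cosh_eq]
  have hu : 0 < Real.exp (-t) := Real.exp_pos _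
  rw [div_div_div_cancel_right₀ (two_ne_zero)]
  rw [div_le_one (by positivity)]
  linarith

/-- tanh t ≥ 0 for t ≥ 0. -/
lemma tanh_nonneg' {t : ℝ} (ht : 0 ≤ t) : 0 ≤ Real.tanh t := by
  rw [Real.tanh_eq_sinh_div_cosh]
  have h1 : 0 ≤ Real.sinh t := by
    rw [Real.sinh_eq]
    have : Real.exp (-t) ≤ Real.exp t := Real.exp_le_exp.2 (by linarith)
    linarith
  exact div_nonneg h1 (Real.cosh_pos t).le

/-- tanh t ≥ t/(1+t) for t ≥ 0. -/
lemma tanh_ge_div {t : ℝ} (ht : 0 ≤ t) : t / (1 + t) ≤ Real.tanh t := by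
  refine le_trans ?_ (tanh_ge_one_sub_exp t)
  have h1 : Real.exp (-t) ≤ 1 / (1 + t) := by
    rw [le_div_iff₀ (by linarith)]
    have := Real.add_one_le_exp t
    have hmul : Real.exp t * Real.exp (-t) = 1 := by rw [← Real.exp_add]; simp
    have hu : 0 < Real.exp (-t) := Real.exp_pos _
    nlinarith
  have : t / (1 + t) = 1 - 1 / (1 + t) := by field_simp; ring
  rw [this]; linarith

/-- If αₙ ∈ (0,1) satisfies the rescaled characteristic equation
tanh(a(nπ/c)√(1−αₙ))/√(1−αₙ) = tanh(b(nπ/c)√(1+αₙ))/√(1+αₙ) for all n ≥ 1, then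
n√(1−αₙ) → +∞ and αₙ → 0. -/
theorem stmt_2 (ε a b c : ℝ) (hε : 0 < ε) (ha : 0 < a) (hb : 0 < b) (hc : 0 < c)
    (α : ℕ → ℝ)
    (hmem : ∀ n : ℕ, 1 ≤ n → α n ∈ Set.Ioo (0 : ℝ) 1)
    (heq : ∀ n : ℕ, 1 ≤ n →
      Real.tanh (a * ((n : ℝ) * π / c) * Real.sqrt (1 - α n)) / Real.sqrt (1 - α n)
        = Real.tanh (b * ((n : ℝ) * π / c) * Real.sqrt (1 + α n)) / Real.sqrt (1 + α n)) :
    Tendsto (fun n : ℕ => (n : ℝ) * Real.sqrt (1 - α n)) atTop atTop ∧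
    Tendsto α atTop (nhds 0) := by
  have hπ : 0 < π := Real.pi_pos
  -- basic facts about x n := √(1-αn), y n := √(1+αn)
  have hxpos : ∀ n : ℕ, 1 ≤ n → 0 < Real.sqrt (1 - α n) := fun n hn => by
    have h := hmem n hn
    exact Real.sqrt_pos.2 (by linarith [h.2])
  have hxlt : ∀ n : ℕ, 1 ≤ n → Real.sqrt (1 - α n) < 1 := fun n hn => by
    have h := hmem n hn
    have : Real.sqrt (1 - α n) < Real.sqrt 1 :=
      Real.sqrt_lt_sqrt (by linarith [h.2]) (by linarith [h.1])
    simpa using this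
  have hyge : ∀ n : ℕ, 1 ≤ n → 1 ≤ Real.sqrt (1 + α n) := fun n hn => by
    have h := hmem n hn
    have : Real.sqrt 1 ≤ Real.sqrt (1 + α n) := Real.sqrt_le_sqrt (by linarith [h.1])
    simpa using this
  -- key inequality: tanh tₙ ≤ xₙ
  have key : ∀ n : ℕ, 1 ≤ n →
      Real.tanh (a * ((n : ℝ) * π / c) * Real.sqrt (1 - α n)) ≤ Real.sqrt (1 - α n) := by
    intro n hn
    have hx := hxpos n hn
    have hy := hyge n hn
    have hE := heq n hn
    have h1 : Real.tanh (b * ((n : ℝ) * π / c) * Real.sqrt (1 + α n)) /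
        Real.sqrt (1 + α n) ≤ 1 := by
      rw [div_le_one (by linarith)]
      exact le_trans (tanh_le_one' _) hy
    have h2 : Real.tanh (a * ((n : ℝ) * π / c) * Real.sqrt (1 - α n)) /
        Real.sqrt (1 - α n) ≤ 1 := hE ▸ h1
    rwa [div_le_one hx] at h2
  -- tₙ nonneg
  have htnn : ∀ n : ℕ, 1 ≤ n → 0 ≤ a * ((n : ℝ) * π / c) * Real.sqrt (1 - α n) := by
    intro n hn
    have hn' : (0 : ℝ) ≤ (n : ℝ) := Nat.cast_nonneg n
    have := (hxpos n hn).le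
    positivity
  -- eventually xₙ ≥ 1/2
  have hhalf : ∀ᶠ n : ℕ in atTop, (1 : ℝ) / 2 ≤ Real.sqrt (1 - α n) := by
    have hlim : Tendsto (fun n : ℕ => a * ((n : ℝ) * π / c)) atTop atTop := by
      have : Tendsto (fun n : ℕ => (n : ℝ)) atTop atTop := tendsto_natCast_atTop_atTop
      have h2 : Tendsto (fun n : ℕ => (n : ℝ) * (π / c)) atTop atTop :=
        this.atTop_mul_const (by positivity)
      have h3 : Tendsto (fun n : ℕ => a * ((n : ℝ) * (π / c))) atTop atTop :=
        h2.const_mul_atTop ha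
      convert h3 using 2 with n
      ring
    filter_upwards [hlim.eventually_ge_atTop 2, eventually_ge_atTop 1] with n hA hn
    by_contra hcon
    push_neg at hcon
    set x := Real.sqrt (1 - α n) with hxdef
    set A := a * ((n : ℝ) * π / c) with hAdef
    have hx : 0 < x := hxpos n hn
    have ht : 0 ≤ A * x := htnn n hn
    have h1 : (A * x) / (1 + A * x) ≤ x := le_trans (tanh_ge_div ht) (key n hn)
    rw [div_le_iff₀ (by linarith)] at h1
    have hAx : 0 < A * x := mul_pos (by linarith) hx
    have k1 : A * x * x < A * x * (1 / 2) := mul_lt_mul_of_pos_left hcon hAx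
    have k2 : 2 * x ≤ A * x := mul_le_mul_of_nonneg_right hA hx.le
    nlinarith [k1, k2, h1]
  -- Part 1
  have part1 : Tendsto (fun n : ℕ => (n : ℝ) * Real.sqrt (1 - α n)) atTop atTop := by
    have hlow : Tendsto (fun n : ℕ => (n : ℝ) * (1 / 2)) atTop atTop :=
      tendsto_natCast_atTop_atTop.atTop_mul_const (by norm_num)
    refine tendsto_atTop_mono' atTop ?_ hlow
    filter_upwards [hhalf] with n hn
    have : (0 : ℝ) ≤ (n : ℝ) := Nat.cast_nonneg n
    exact mul_le_mul_of_nonneg_left hn this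
  refine ⟨part1, ?_⟩
  -- Part 2: αₙ ≤ 2 exp(-tₙ), tₙ → ∞
  have htlim : Tendsto (fun n : ℕ => a * ((n : ℝ) * π / c) * Real.sqrt (1 - α n))
      atTop atTop := by
    have h2 : Tendsto (fun n : ℕ => ((n : ℝ) * Real.sqrt (1 - α n)) * (a * π / c))
        atTop atTop := part1.atTop_mul_const (by positivity)
    convert h2 using 2 with n
    ring
  have hexp : Tendsto (fun n : ℕ =>
      2 * Real.exp (-(a * ((n : ℝ) * π / c) * Real.sqrt (1 - α n)))) atTop (nhds 0) := by
    have h1 : Tendsto (fun n : ℕ =>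
        -(a * ((n : ℝ) * π / c) * Real.sqrt (1 - α n))) atTop atBot :=
      tendsto_neg_atTop_atBot.comp htlim
    have h2 := (Real.tendsto_exp_atBot).comp h1
    have := h2.const_mul (2 : ℝ)
    simpa using this
  refine squeeze_zero' ?_ ?_ hexp
  · filter_upwards [eventually_ge_atTop 1] with n hn
    exact (hmem n hn).1.le
  · filter_upwards [eventually_ge_atTop 1] with n hn
    set t := a * ((n : ℝ) * π / c) * Real.sqrt (1 - α n) with htdef
    have h1 : 1 - Real.exp (-t) ≤ Real.tanh t := tanh_ge_one_sub_exp t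
    have h2 : Real.tanh t ≤ Real.sqrt (1 - α n) := key n hn
    have h3 : Real.sqrt (1 - α n) ^ 2 = 1 - α n := by
      rw [sq]; exact Real.mul_self_sqrt (by linarith [(hmem n hn).2])
    have h4 : Real.exp (-t) ≤ 1 := Real.exp_le_one_iff.2 (by linarith [htnn n hn])
    have h5 : 0 ≤ Real.sqrt (1 - α n) := Real.sqrt_nonneg _
    nlinarith [Real.exp_pos (-t)]
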